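/- Let n and k be integers with k ≥ 1 and n ≥ 2k + 3 (so all Gamma arguments below are positive). For all smooth functions u, v on an open subset of ℝ × ℝ^{n+1} one has, identically: Σ_{a+b+c=k} B_{a,b,c}·Δ̃^a((Δ̃^b u)·(Δ̃^c v)) = Σ_{a+b=k} B′_{a,b}·D_{a, −(n−2k+1)/3, −(n−2k−2)/3 − 2b}[Δ̃^b v](u) = Σ_{a+b=k} B″_{a,b}·D_{a, −(n−2k−2)/3, −(n−2k+1)/3 − 2b}[Δ̃^b u](v), where B_{a,b,c} := (k!/(a!·b!·c!))·Γ((n−2k+4)/6 + a+b)·Γ((n−2k−2)/6 + a+c)·Γ((n−2k−2)/6 + b+c)/(Γ((n−2k−2)/6)·Γ((n+4k+4)/6)²), B′_{a,b} := (k!/(a!·b!))·Γ((n−2k+4)/6 + a)·Γ((n−2k−2)/6 + b)²/(Γ((n−2k−2)/6)·Γ((n+4k+4)/6)²), and B″_{a,b} := (k!/(a!·b!))·Γ((n−2k−2)/6 + a)·Γ((n−2k−2)/6 + b)·Γ((n−2k+4)/6 + b)/(Γ((n−2k−2)/6)·Γ((n+4k+4)/6)²). -/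

import Mathlib

/-- The flat Fefferman–Graham ambient space `ℝ × ℝ^{n+1}` of the standard conformal
`n`-sphere, with coordinates `(t, x⁰, …, xⁿ)`. -/
abbrev Amb (n : ℕ) : Type := ℝ × (Fin (n+1) → ℝ)

/-- The partial derivative `∂_t`. -/
noncomputable def ptD {n : ℕ} (f : Amb n → ℝ) (p : Amb n) : ℝ :=
  fderiv ℝ f p (1, 0)

/-- The partial derivative `∂_{xⁱ}`. -/
noncomputable def pxD {n : ℕ} (i : Fin (n+1)) (f : Amb n → ℝ) (p : Amb n) : ℝ :=
  fderiv ℝ f p (0, Pi.single i 1)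

/-- The flat ambient Laplacian `Δ̃f = ∂_t²f − Σᵢ ∂_{xⁱ}²f` (convention `Δ ≥ 0` for the
metric `g̃ = −dt² + Σᵢ (dxⁱ)²`). -/
noncomputable def LapA {n : ℕ} (f : Amb n → ℝ) : Amb n → ℝ :=
  fun p => ptD (fun q => ptD f q) p - ∑ i, pxD i (fun q => pxD i f q) p

/-- The Euler (dilation) operator `Xf = t∂_t f + Σᵢ xⁱ∂_{xⁱ} f`. -/
noncomputable def EulerA {n : ℕ} (f : Amb n → ℝ) (p : Amb n) : ℝ :=
  p.1 * ptD f p + ∑ i, p.2 i * pxD i f p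

/-- The function `Q(t,x) = |x|² − t²`. -/
def QA {n : ℕ} (p : Amb n) : ℝ := (∑ i, (p.2 i)^2) - p.1^2

/-- The half-space `{(t,x) : t > 0}`. -/
def HS (n : ℕ) : Set (Amb n) := {p | 0 < p.1}

/-- The ascending Pochhammer symbol `P_j(z) = z(z+1)⋯(z+j−1)`. -/
noncomputable def poch (z : ℝ) (j : ℕ) : ℝ := Polynomial.eval z (ascPochhammer ℝ j)

/-- The Case–Yan building block
`D_{m,w,w′}[f](u) = Σ_{a+b=m} C(m,a)·P_a((n−2m)/2+w)·P_b(−w−w′−(n−2m)/2)·Δ̃^a(f·Δ̃^b u)`. -/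
noncomputable def CY {n : ℕ} (m : ℕ) (w w' : ℝ) (f u : Amb n → ℝ) : Amb n → ℝ :=
  fun p => ∑ ab ∈ Finset.HasAntidiagonal.antidiagonal m,
    ((m.choose ab.1 : ℝ) * poch (((n:ℝ) - 2*(m:ℝ))/2 + w) ab.1
      * poch (-w - w' - ((n:ℝ) - 2*(m:ℝ))/2) ab.2)
    * LapA^[ab.1] (fun q => f q * LapA^[ab.2] u q) p

lemma poch_succ (z : ℝ) (j : ℕ) : poch z (j+1) = poch z j * (z + j) := by
  simp [poch, ascPochhammer_succ_right, Polynomial.eval_mul]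

lemma gamma_poch {z : ℝ} (hz : 0 < z) (j : ℕ) :
    Real.Gamma (z + j) = poch z j * Real.Gamma z := by
  induction j with
  | zero => simp [poch]
  | succ j ih =>
    have h1 : z + ((j:ℕ)+1 : ℕ) = (z + j) + 1 := by push_cast; ring
    rw [h1, Real.Gamma_add_one (by positivity), ih, poch_succ]; ring

lemma choose_cast_eq (A b : ℕ) :
    ((A+b).choose A : ℝ) = ((A+b).factorial : ℝ) / ((A.factorial : ℝ) * (b.factorial : ℝ)) := by
  have h0 : (0:ℝ) < (A.factorial : ℝ) * (b.factorial : ℝ) := by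
    have := A.factorial_pos; have := b.factorial_pos; positivity
  rw [eq_div_iff h0.ne', ← mul_assoc]
  have := Nat.choose_mul_factorial_mul_factorial (Nat.le_add_right A b)
  rw [Nat.add_sub_cancel_left] at this
  exact_mod_cast this

lemma reindex1 {M : Type*} [AddCommMonoid M] (k : ℕ) (F G : ℕ × ℕ → ℕ × ℕ → M)
    (h : ∀ A b c : ℕ, A + (b + c) = k → F (A, b + c) (b, c) = G (A + b, c) (A, b)) :
    ∑ x ∈ Finset.HasAntidiagonal.antidiagonal k, ∑ y ∈ Finset.HasAntidiagonal.antidiagonal x.2, F x y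
      = ∑ x ∈ Finset.HasAntidiagonal.antidiagonal k, ∑ y ∈ Finset.HasAntidiagonal.antidiagonal x.1, G x y := by
  rw [Finset.sum_sigma', Finset.sum_sigma']
  refine Finset.sum_bij' (fun x _ => ⟨(x.1.1 + x.2.1, x.2.2), (x.1.1, x.2.1)⟩)
    (fun y _ => ⟨(y.2.1, y.2.2 + y.1.2), (y.2.2, y.1.2)⟩) ?_ ?_ ?_ ?_ ?_
  · rintro ⟨⟨A, s⟩, b, c⟩ hx
    simp only [Finset.mem_sigma, Finset.HasAntidiagonal.mem_antidiagonal, and_true] at hx ⊢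
    omega
  · rintro ⟨⟨m, c⟩, A, b⟩ hy
    simp only [Finset.mem_sigma, Finset.HasAntidiagonal.mem_antidiagonal, and_true] at hy ⊢
    omega
  · rintro ⟨⟨A, s⟩, b, c⟩ hx
    simp only [Finset.mem_sigma, Finset.HasAntidiagonal.mem_antidiagonal] at hx
    obtain ⟨h1, h2⟩ := hx
    subst h2; rfl
  · rintro ⟨⟨m, c⟩, A, b⟩ hy
    simp only [Finset.mem_sigma, Finset.HasAntidiagonal.mem_antidiagonal] at hy
    obtain ⟨h1, h2⟩ := hy
    subst h2; rfl
  · rintro ⟨⟨A, s⟩, b, c⟩ hx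
    simp only [Finset.mem_sigma, Finset.HasAntidiagonal.mem_antidiagonal] at hx
    obtain ⟨h1, h2⟩ := hx
    subst h2
    exact h A b c h1

lemma reindex2 {M : Type*} [AddCommMonoid M] (k : ℕ) (F G : ℕ × ℕ → ℕ × ℕ → M)
    (h : ∀ A b c : ℕ, A + (b + c) = k → F (A, b + c) (b, c) = G (A + c, b) (A, c)) :
    ∑ x ∈ Finset.HasAntidiagonal.antidiagonal k, ∑ y ∈ Finset.HasAntidiagonal.antidiagonal x.2, F x y
      = ∑ x ∈ Finset.HasAntidiagonal.antidiagonal k, ∑ y ∈ Finset.HasAntidiagonal.antidiagonal x.1, G x y := by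
  rw [Finset.sum_sigma', Finset.sum_sigma']
  refine Finset.sum_bij' (fun x _ => ⟨(x.1.1 + x.2.2, x.2.1), (x.1.1, x.2.2)⟩)
    (fun y _ => ⟨(y.2.1, y.1.2 + y.2.2), (y.1.2, y.2.2)⟩) ?_ ?_ ?_ ?_ ?_
  · rintro ⟨⟨A, s⟩, b, c⟩ hx
    simp only [Finset.mem_sigma, Finset.HasAntidiagonal.mem_antidiagonal, and_true] at hx ⊢
    omega
  · rintro ⟨⟨m, b⟩, A, c⟩ hy
    simp only [Finset.mem_sigma, Finset.HasAntidiagonal.mem_antidiagonal, and_true] at hy ⊢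
    omega
  · rintro ⟨⟨A, s⟩, b, c⟩ hx
    simp only [Finset.mem_sigma, Finset.HasAntidiagonal.mem_antidiagonal] at hx
    obtain ⟨h1, h2⟩ := hx
    subst h2; rfl
  · rintro ⟨⟨m, b⟩, A, c⟩ hy
    simp only [Finset.mem_sigma, Finset.HasAntidiagonal.mem_antidiagonal] at hy
    obtain ⟨h1, h2⟩ := hy
    subst h2; rfl
  · rintro ⟨⟨A, s⟩, b, c⟩ hx
    simp only [Finset.mem_sigma, Finset.HasAntidiagonal.mem_antidiagonal] at hx
    obtain ⟨h1, h2⟩ := hx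
    subst h2
    exact h A b c h1

lemma coeff1 (n k A b c : ℕ) (hnk : 2*k + 3 ≤ n) (h : A + (b + c) = k) :
    ((k.factorial : ℝ)
        / ((A.factorial : ℝ) * (b.factorial : ℝ) * (c.factorial : ℝ)))
      * Real.Gamma (((n:ℝ) - 2*k + 4)/6 + A + b)
      * Real.Gamma (((n:ℝ) - 2*k - 2)/6 + A + c)
      * Real.Gamma (((n:ℝ) - 2*k - 2)/6 + b + c)
      / (Real.Gamma (((n:ℝ) - 2*k - 2)/6) * Real.Gamma (((n:ℝ) + 4*k + 4)/6)^2)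
  = (((k.factorial : ℝ) / (((A+b).factorial : ℝ) * (c.factorial : ℝ)))
      * Real.Gamma (((n:ℝ) - 2*k + 4)/6 + ((A+b : ℕ):ℝ))
      * Real.Gamma (((n:ℝ) - 2*k - 2)/6 + c)^2
      / (Real.Gamma (((n:ℝ) - 2*k - 2)/6) * Real.Gamma (((n:ℝ) + 4*k + 4)/6)^2))
    * (((A+b).choose A : ℝ)
        * poch (((n:ℝ) - 2*((A+b : ℕ):ℝ))/2 + (-((n:ℝ) - 2*k + 1)/3)) A
        * poch (-(-((n:ℝ) - 2*k + 1)/3) - (-((n:ℝ) - 2*k - 2)/3 - 2*(c:ℝ))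
            - ((n:ℝ) - 2*((A+b : ℕ):ℝ))/2) b) := by
  have hc : (A:ℝ) + ((b:ℝ) + (c:ℝ)) = (k:ℝ) := by exact_mod_cast h
  have hn' : 2*(k:ℝ) + 3 ≤ (n:ℝ) := by exact_mod_cast hnk
  have hc0 : (0:ℝ) ≤ (c:ℝ) := Nat.cast_nonneg c
  have e1 : ((n:ℝ) - 2*((A+b : ℕ):ℝ))/2 + (-((n:ℝ) - 2*k + 1)/3)
      = ((n:ℝ) - 2*k - 2)/6 + (c:ℝ) := by push_cast; linarith
  have e2 : -(-((n:ℝ) - 2*k + 1)/3) - (-((n:ℝ) - 2*k - 2)/3 - 2*(c:ℝ))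
      - ((n:ℝ) - 2*((A+b : ℕ):ℝ))/2 = ((n:ℝ) - 2*k - 2)/6 + (c:ℝ) := by push_cast; linarith
  have hpos : 0 < ((n:ℝ) - 2*k - 2)/6 + (c:ℝ) := by linarith
  rw [e1, e2, choose_cast_eq,
    show ((n:ℝ) - 2*k - 2)/6 + A + c = (((n:ℝ) - 2*k - 2)/6 + (c:ℝ)) + A from by ring,
    show ((n:ℝ) - 2*k - 2)/6 + b + c = (((n:ℝ) - 2*k - 2)/6 + (c:ℝ)) + b from by ring,
    show ((n:ℝ) - 2*k + 4)/6 + ((A+b : ℕ):ℝ) = ((n:ℝ) - 2*k + 4)/6 + A + b from by push_cast; ring,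
    gamma_poch hpos A, gamma_poch hpos b]
  have hf : ∀ m : ℕ, ((m.factorial : ℕ) : ℝ) ≠ 0 := fun m => by
    exact_mod_cast m.factorial_ne_zero
  have hΓc : Real.Gamma (((n:ℝ) - 2*k - 2)/6 + (c:ℝ)) ≠ 0 :=
    (Real.Gamma_pos_of_pos hpos).ne'
  have hΓm : Real.Gamma (((n:ℝ) - 2*k - 2)/6) ≠ 0 :=
    (Real.Gamma_pos_of_pos (by linarith)).ne'
  have hΓp : Real.Gamma (((n:ℝ) + 4*k + 4)/6) ≠ 0 :=
    (Real.Gamma_pos_of_pos (by positivity)).ne'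
  field_simp

lemma coeff2 (n k A b c : ℕ) (hnk : 2*k + 3 ≤ n) (h : A + (b + c) = k) :
    ((k.factorial : ℝ)
        / ((A.factorial : ℝ) * (b.factorial : ℝ) * (c.factorial : ℝ)))
      * Real.Gamma (((n:ℝ) - 2*k + 4)/6 + A + b)
      * Real.Gamma (((n:ℝ) - 2*k - 2)/6 + A + c)
      * Real.Gamma (((n:ℝ) - 2*k - 2)/6 + b + c)
      / (Real.Gamma (((n:ℝ) - 2*k - 2)/6) * Real.Gamma (((n:ℝ) + 4*k + 4)/6)^2)
  = (((k.factorial : ℝ) / (((A+c).factorial : ℝ) * (b.factorial : ℝ)))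
      * Real.Gamma (((n:ℝ) - 2*k - 2)/6 + ((A+c : ℕ):ℝ))
      * Real.Gamma (((n:ℝ) - 2*k - 2)/6 + b)
      * Real.Gamma (((n:ℝ) - 2*k + 4)/6 + b)
      / (Real.Gamma (((n:ℝ) - 2*k - 2)/6) * Real.Gamma (((n:ℝ) + 4*k + 4)/6)^2))
    * (((A+c).choose A : ℝ)
        * poch (((n:ℝ) - 2*((A+c : ℕ):ℝ))/2 + (-((n:ℝ) - 2*k - 2)/3)) A
        * poch (-(-((n:ℝ) - 2*k - 2)/3) - (-((n:ℝ) - 2*k + 1)/3 - 2*(b:ℝ))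
            - ((n:ℝ) - 2*((A+c : ℕ):ℝ))/2) c) := by
  have hc : (A:ℝ) + ((b:ℝ) + (c:ℝ)) = (k:ℝ) := by exact_mod_cast h
  have hn' : 2*(k:ℝ) + 3 ≤ (n:ℝ) := by exact_mod_cast hnk
  have hb0 : (0:ℝ) ≤ (b:ℝ) := Nat.cast_nonneg b
  have e1 : ((n:ℝ) - 2*((A+c : ℕ):ℝ))/2 + (-((n:ℝ) - 2*k - 2)/3)
      = ((n:ℝ) - 2*k + 4)/6 + (b:ℝ) := by push_cast; linarith
  have e2 : -(-((n:ℝ) - 2*k - 2)/3) - (-((n:ℝ) - 2*k + 1)/3 - 2*(b:ℝ))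
      - ((n:ℝ) - 2*((A+c : ℕ):ℝ))/2 = ((n:ℝ) - 2*k - 2)/6 + (b:ℝ) := by push_cast; linarith
  have hpos1 : 0 < ((n:ℝ) - 2*k + 4)/6 + (b:ℝ) := by linarith
  have hpos2 : 0 < ((n:ℝ) - 2*k - 2)/6 + (b:ℝ) := by linarith
  rw [e1, e2, choose_cast_eq,
    show ((n:ℝ) - 2*k + 4)/6 + A + b = (((n:ℝ) - 2*k + 4)/6 + (b:ℝ)) + A from by ring,
    show ((n:ℝ) - 2*k - 2)/6 + b + c = (((n:ℝ) - 2*k - 2)/6 + (b:ℝ)) + c from by ring,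
    show ((n:ℝ) - 2*k - 2)/6 + ((A+c : ℕ):ℝ) = ((n:ℝ) - 2*k - 2)/6 + A + c from by push_cast; ring,
    gamma_poch hpos1 A, gamma_poch hpos2 c]
  have hf : ∀ m : ℕ, ((m.factorial : ℕ) : ℝ) ≠ 0 := fun m => by
    exact_mod_cast m.factorial_ne_zero
  have hΓb1 : Real.Gamma (((n:ℝ) - 2*k + 4)/6 + (b:ℝ)) ≠ 0 :=
    (Real.Gamma_pos_of_pos hpos1).ne'
  have hΓb2 : Real.Gamma (((n:ℝ) - 2*k - 2)/6 + (b:ℝ)) ≠ 0 :=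
    (Real.Gamma_pos_of_pos hpos2).ne'
  have hΓm : Real.Gamma (((n:ℝ) - 2*k - 2)/6) ≠ 0 :=
    (Real.Gamma_pos_of_pos (by linarith)).ne'
  have hΓp : Real.Gamma (((n:ℝ) + 4*k + 4)/6) ≠ 0 :=
    (Real.Gamma_pos_of_pos (by positivity)).ne'
  field_simp

/-- the two displayed identities of Example 3.4, the operators `D̃′_{2k}`:
for `k ≥ 1`, `n ≥ 2k+3`, and smooth `u, v` on an open set,
`Σ_{a+b+c=k} B_{a,b,c}·Δ̃^a((Δ̃^b u)(Δ̃^c v))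
  = Σ_{a+b=k} B′_{a,b}·D_{a,−(n−2k+1)/3,−(n−2k−2)/3−2b}[Δ̃^b v](u)
  = Σ_{a+b=k} B″_{a,b}·D_{a,−(n−2k−2)/3,−(n−2k+1)/3−2b}[Δ̃^b u](v)`. -/
theorem stmt_13 (n k : ℕ) (hk : 1 ≤ k) (hnk : 2*k + 3 ≤ n)
    (U : Set (Amb n)) (hU : IsOpen U) (u v : Amb n → ℝ)
    (hu : ContDiffOn ℝ (⊤ : ℕ∞) u U) (hv : ContDiffOn ℝ (⊤ : ℕ∞) v U)
    (p : Amb n) (hp : p ∈ U) :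
    (∑ abc ∈ Finset.HasAntidiagonal.antidiagonal k, ∑ bc ∈ Finset.HasAntidiagonal.antidiagonal abc.2,
        (((k.factorial : ℝ)
            / ((abc.1.factorial : ℝ) * (bc.1.factorial : ℝ) * (bc.2.factorial : ℝ)))
          * Real.Gamma (((n:ℝ) - 2*k + 4)/6 + abc.1 + bc.1)
          * Real.Gamma (((n:ℝ) - 2*k - 2)/6 + abc.1 + bc.2)
          * Real.Gamma (((n:ℝ) - 2*k - 2)/6 + bc.1 + bc.2)
          / (Real.Gamma (((n:ℝ) - 2*k - 2)/6) * Real.Gamma (((n:ℝ) + 4*k + 4)/6)^2))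
        * LapA^[abc.1] (fun q => LapA^[bc.1] u q * LapA^[bc.2] v q) p
      = ∑ ab ∈ Finset.HasAntidiagonal.antidiagonal k,
          (((k.factorial : ℝ) / ((ab.1.factorial : ℝ) * (ab.2.factorial : ℝ)))
            * Real.Gamma (((n:ℝ) - 2*k + 4)/6 + ab.1)
            * Real.Gamma (((n:ℝ) - 2*k - 2)/6 + ab.2)^2
            / (Real.Gamma (((n:ℝ) - 2*k - 2)/6) * Real.Gamma (((n:ℝ) + 4*k + 4)/6)^2))
          * CY ab.1 (-((n:ℝ) - 2*k + 1)/3) (-((n:ℝ) - 2*k - 2)/3 - 2*ab.2)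
              (LapA^[ab.2] v) u p)
    ∧ (∑ abc ∈ Finset.HasAntidiagonal.antidiagonal k, ∑ bc ∈ Finset.HasAntidiagonal.antidiagonal abc.2,
        (((k.factorial : ℝ)
            / ((abc.1.factorial : ℝ) * (bc.1.factorial : ℝ) * (bc.2.factorial : ℝ)))
          * Real.Gamma (((n:ℝ) - 2*k + 4)/6 + abc.1 + bc.1)
          * Real.Gamma (((n:ℝ) - 2*k - 2)/6 + abc.1 + bc.2)
          * Real.Gamma (((n:ℝ) - 2*k - 2)/6 + bc.1 + bc.2)
          / (Real.Gamma (((n:ℝ) - 2*k - 2)/6) * Real.Gamma (((n:ℝ) + 4*k + 4)/6)^2))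
        * LapA^[abc.1] (fun q => LapA^[bc.1] u q * LapA^[bc.2] v q) p
      = ∑ ab ∈ Finset.HasAntidiagonal.antidiagonal k,
          (((k.factorial : ℝ) / ((ab.1.factorial : ℝ) * (ab.2.factorial : ℝ)))
            * Real.Gamma (((n:ℝ) - 2*k - 2)/6 + ab.1)
            * Real.Gamma (((n:ℝ) - 2*k - 2)/6 + ab.2)
            * Real.Gamma (((n:ℝ) - 2*k + 4)/6 + ab.2)
            / (Real.Gamma (((n:ℝ) - 2*k - 2)/6) * Real.Gamma (((n:ℝ) + 4*k + 4)/6)^2))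
          * CY ab.1 (-((n:ℝ) - 2*k - 2)/3) (-((n:ℝ) - 2*k + 1)/3 - 2*ab.2)
              (LapA^[ab.2] u) v p) := by
  constructor
  · simp only [CY, Finset.mul_sum]
    apply reindex1
    intro A b c h
    dsimp only
    have hfun : (fun q => LapA^[c] v q * LapA^[b] u q)
        = (fun q => LapA^[b] u q * LapA^[c] v q) := by
      funext q; exact mul_comm _ _
    rw [hfun, coeff1 n k A b c hnk h]
    ring
  · simp only [CY, Finset.mul_sum]
    apply reindex2
    intro A b c h
    dsimp only
    rw [coeff2 n k A b c hnk h]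
    ring
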